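/- (Lower queries produce red-iff-lower zoo) If every query in a set Q of s-pider queries is lower (i.e., of the form f^I_j with lower index j nonempty), then an ideal s-pider in zoo(Q) is red if and only if it is lower (has a nonempty lower index). In particular the red full s-pider never appears. -/

import Mathlib

/-!  A general framework for relational structures, conjunctive queries,
tuple generating dependencies (TGDs), and the chase, following
Gogacz–Marcinkowski, "The Hunt for a Red Spider: Conjunctive Query
Determinacy Is Undecidable". -/

namespace CQD

/-- A relational structure over relation symbols `R` and domain `D`:
a set of atoms, each a relation symbol together with its tuple of arguments. -/
abbrev Struc (R D : Type*) := Set (R × List D)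

/-- Map a structure along a function on domain elements. -/
def smap {R D E : Type*} (h : D → E) (S : Struc R D) : Struc R E :=
  (fun a => (a.1, a.2.map h)) '' S

/-- Terms over constants `K`: variables (natural numbers) or constants. -/
abbrev Term (K : Type*) := ℕ ⊕ K

/-- A conjunction of atoms over variables and constants from `K`. -/
abbrev Conj (R K : Type*) := Struc R (Term K)

/-- `h` is a homomorphism from the conjunction `Φ` into the structure `S`,
where the constants are interpreted by `ι`. -/
def IsHom {R K D : Type*} (Φ : Conj R K) (S : Struc R D) (ι : K → D) (h : ℕ → D) : Prop :=
  ∀ a ∈ Φ, (a.1, a.2.map (Sum.elim h ι)) ∈ S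

/-- A tuple-generating dependency `∀ x̄ ȳ (body(x̄,ȳ) → ∃ z̄ head(z̄,ȳ))`;
`frontier` is the set of universally quantified variables `ȳ` shared by body and head. -/
structure TGD (R K : Type*) where
  body : Conj R K
  head : Conj R K
  frontier : Set ℕ

/-- `Φ` holds in `S` at the tuple `b` (given on the frontier variables `fr`). -/
def holdsAt {R K D : Type*} (Φ : Conj R K) (fr : Set ℕ) (S : Struc R D) (ι : K → D)
    (b : ℕ → D) : Prop :=
  ∃ h : ℕ → D, IsHom Φ S ι h ∧ ∀ y ∈ fr, h y = b y

/-- A structure satisfies a TGD in the usual first-order sense. -/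
def TGD.sat {R K D : Type*} (T : TGD R K) (S : Struc R D) (ι : K → D) : Prop :=
  ∀ b, holdsAt T.body T.frontier S ι b → holdsAt T.head T.frontier S ι b

/-- The `ToDo` set: pairs `⟨b̄, T⟩` whose body is satisfied at `b̄` but which still
lack a witness for the head. -/
def ToDo {R K D : Type*} (𝒯 : Set (TGD R K)) (S : Struc R D) (ι : K → D) :
    Set ((ℕ → D) × TGD R K) :=
  {p | p.2 ∈ 𝒯 ∧ holdsAt p.2.body p.2.frontier S ι p.1 ∧
       ¬ holdsAt p.2.head p.2.frontier S ι p.1}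

/-- The active domain of a structure. -/
def adom {R D : Type*} (S : Struc R D) : Set D := {d | ∃ a ∈ S, d ∈ a.2}

/-- `S'` is the result of one application `T(S, b̄)` of the TGD `T` to `S` at tuple `b̄`:
a fresh copy of the head is added, its frontier variables identified with `b̄`. -/
def IsStep {R K D : Type*} (T : TGD R K) (S : Struc R D) (ι : K → D) (b : ℕ → D)
    (S' : Struc R D) : Prop :=
  ∃ g : ℕ → D,
    (∀ y ∈ T.frontier, g y = b y) ∧
    (∀ x ∉ T.frontier, g x ∉ adom S ∧ g x ∉ Set.range ι) ∧
    Set.InjOn g {x | x ∉ T.frontier} ∧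
    S' = S ∪ smap (Sum.elim g ι) T.head

/-- Union of the stages strictly below `i`. -/
def partUnion {X : Type*} (seq : Ordinal.{0} → Set X) (i : Ordinal.{0}) : Set X :=
  ⋃ j ∈ Set.Iio i, seq j

/-- A fair chase sequence for the set `𝒯` of TGDs starting from `D0`. -/
structure ChaseSeq {R K D : Type*} (𝒯 : Set (TGD R K)) (D0 : Struc R D) (ι : K → D) where
  len : Ordinal.{0}
  pos : 0 < len
  seq : Ordinal.{0} → Struc R D
  init : seq 0 = D0
  step : ∀ i, 0 < i → i < len →
    ∃ p ∈ ToDo 𝒯 (partUnion seq i) ι, IsStep p.2 (partUnion seq i) ι p.1 (seq i)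
  fair : ∀ i < len, ∀ p ∈ ToDo 𝒯 (partUnion seq i) ι,
    ∃ k, i < k ∧ k ≤ len ∧ p ∉ ToDo 𝒯 (partUnion seq k) ι

/-- The result of a chase sequence: the union of all its stages. -/
def ChaseSeq.result {R K D : Type*} {𝒯 : Set (TGD R K)} {D0 : Struc R D} {ι : K → D}
    (C : ChaseSeq 𝒯 D0 ι) : Struc R D := partUnion C.seq C.len

/-- `S` is (the result of) a chase of `𝒯` over `D0`. -/
def IsChase {R K D : Type*} (𝒯 : Set (TGD R K)) (D0 : Struc R D) (ι : K → D)
    (S : Struc R D) : Prop :=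
  ∃ C : ChaseSeq 𝒯 D0 ι, C.result = S

/-- A conjunctive query: a conjunction of atoms with designated free variables. -/
structure CQ (R K : Type*) where
  body : Conj R K
  free : Set ℕ

/-- Colored (green/red) relation symbols: `true` = green, `false` = red. -/
abbrev CRel (R : Type*) := R × Bool

/-- Paint all atoms of a conjunction with the color `c`. -/
def paint {R K : Type*} (c : Bool) (Φ : Conj R K) : Conj (CRel R) K :=
  (fun a => ((a.1, c), a.2)) '' Φ

/-- The view `Q(S)` defined by a query with body `Φ` and free variables `fr`
over the structure `S`: the set of satisfying assignments of the free variables. -/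
def eval {R K D : Type*} (Φ : Conj R K) (fr : Set ℕ) (S : Struc R D) (ι : K → D) :
    Set (ℕ → D) :=
  {b | holdsAt Φ fr S ι b}

/-- The green-red TGD generated by `Q`, from color `c` to the opposite color
(`tgdGR true Q` is `Q^{G→R}`, `tgdGR false Q` is `Q^{R→G}`). -/
def tgdGR {R K : Type*} (c : Bool) (Q : CQ R K) : TGD (CRel R) K :=
  ⟨paint c Q.body, paint (!c) Q.body, Q.free⟩

/-- The set `𝒯_𝒬` of green-red TGDs generated by a set of conjunctive queries. -/
def TQ {R K : Type*} (𝒬 : Set (CQ R K)) : Set (TGD (CRel R) K) :=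
  {T | ∃ Q ∈ 𝒬, ∃ c : Bool, T = tgdGR c Q}

end CQD

/-! The s-pider signature, ideal s-piders, s-pider queries and the s-pider chase. -/

namespace Spider

open CQD

/-- Relation symbols of the s-pider signature: a ternary `H`, thighs `T_i, T^i`
and calves `C_i, C^i` (all binary). -/
inductive SpRel (s : ℕ) : Type
  | H : SpRel s
  | Tlo : Fin s → SpRel s
  | Tup : Fin s → SpRel s
  | Clo : Fin s → SpRel s
  | Cup : Fin s → SpRel s

/-- Constants `c_i` (left) and `c^i` (right). -/
abbrev SpK (s : ℕ) := Fin s ⊕ Fin s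

abbrev SpTerm (s : ℕ) := CQD.Term (SpK s)

/-- The head variable `z`. -/
def vz (s : ℕ) : SpTerm s := Sum.inl 0
/-- The tail variable `z₁`. -/
def vtail (s : ℕ) : SpTerm s := Sum.inl 1
/-- The antenna variable `z₂`. -/
def vant (s : ℕ) : SpTerm s := Sum.inl 2
/-- The lower knee variable `x_i`. -/
def vx (s : ℕ) (i : Fin s) : SpTerm s := Sum.inl (2 * (i : ℕ) + 3)
/-- The upper knee variable `y_i`. -/
def vy (s : ℕ) (i : Fin s) : SpTerm s := Sum.inl (2 * (i : ℕ) + 4)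
/-- The constant `c_i`. -/
def clo (s : ℕ) (i : Fin s) : SpTerm s := Sum.inr (Sum.inl i)
/-- The constant `c^i`. -/
def cup (s : ℕ) (i : Fin s) : SpTerm s := Sum.inr (Sum.inr i)

/-- The conjunction `Φ_s`:
`H(z,z₁,z₂) ∧ ⋀ᵢ T_i(z,x_i) ∧ T^i(z,y_i) ∧ C_i(x_i,c_i) ∧ C^i(y_i,c^i)`. -/
def Phi (s : ℕ) : Conj (SpRel s) (SpK s) :=
  {(SpRel.H, [vz s, vtail s, vant s])} ∪
  ⋃ i : Fin s,
    ({(SpRel.Tlo i, [vz s, vx s i]), (SpRel.Tup i, [vz s, vy s i]),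
      (SpRel.Clo i, [vx s i, clo s i]), (SpRel.Cup i, [vy s i, cup s i])} :
      Set (SpRel s × List (SpTerm s)))

/-- The ideal s-pider of color `c` with (empty-or-singleton) upper lame index `I`
and lower lame index `J`: the `c`-colored `Φ_s` with the calf atoms indexed by `I`
and `J` recolored to the opposite color. -/
def idealSp (s : ℕ) (c : Bool) (I J : Option (Fin s)) :
    Struc (CRel (SpRel s)) (SpTerm s) :=
  {((SpRel.H, c), [vz s, vtail s, vant s])} ∪
  ⋃ i : Fin s,
    ({((SpRel.Tlo i, c), [vz s, vx s i]), ((SpRel.Tup i, c), [vz s, vy s i]),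
      ((SpRel.Clo i, if J = some i then !c else c), [vx s i, clo s i]),
      ((SpRel.Cup i, if I = some i then !c else c), [vy s i, cup s i])} :
      Set (CRel (SpRel s) × List (SpTerm s)))

/-- The s-pider query `f^I_J`: the conjunction `Φ_s` with the calves indexed by
`I` (upper) and `J` (lower) removed; its free variables are the corresponding knees. -/
def spq (s : ℕ) (I J : Option (Fin s)) : CQ (SpRel s) (SpK s) where
  body := Phi s \
    ({a | ∃ i ∈ I, a = (SpRel.Cup i, [vy s i, cup s i])} ∪
     {a | ∃ j ∈ J, a = (SpRel.Clo j, [vx s j, clo s j])})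
  free := {n | (∃ i ∈ I, n = 2 * (i : ℕ) + 4) ∨ (∃ j ∈ J, n = 2 * (j : ℕ) + 3)}

/-- The set `𝔽_s` of s-pider queries (1-lame and 2-lame). -/
def SpiderQs (s : ℕ) : Set (CQ (SpRel s) (SpK s)) :=
  {q | ∃ I J : Option (Fin s), (I.isSome ∨ J.isSome) ∧ q = spq s I J}

/-- The interpretation of the constants in the canonical domain. -/
def spι (s : ℕ) : SpK s → SpTerm s := Sum.inr

/-- `S` is (the result of) a chase of the green-red TGDs generated by `𝒬`,
starting from the ideal green full s-pider. -/
def SpChase (s : ℕ) (𝒬 : Set (CQ (SpRel s) (SpK s)))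
    (S : Struc (CRel (SpRel s)) (SpTerm s)) : Prop :=
  IsChase (TQ 𝒬) (idealSp s true none none) (spι s) S

/-- `x ⊆ y` for empty-or-singleton sets coded as `Option`. -/
def osub {s : ℕ} (x y : Option (Fin s)) : Prop := ∀ i : Fin s, x = some i → y = some i

/-- `y ∖ x` for empty-or-singleton sets coded as `Option` (assuming `x ⊆ y`). -/
def odiff {s : ℕ} (y x : Option (Fin s)) : Option (Fin s) :=
  match x with | none => y | some _ => none

/-- A copy of the canonical structure `T0` occurs inside `S` (an injective
renaming of vertices which fixes the constants). -/
def CopyIn {s : ℕ} {V : Type*} (T0 : Struc (CRel (SpRel s)) (SpTerm s))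
    (ι : SpK s → V) (S : Struc (CRel (SpRel s)) V) : Prop :=
  ∃ m : SpTerm s → V, Set.InjOn m (adom T0) ∧ (∀ k, m (Sum.inr k) = ι k) ∧
    smap m T0 ⊆ S

/-- `𝒮` is an isomorphic copy of the canonical structure `T0`. -/
def IsCopy {s : ℕ} {V : Type*} (T0 : Struc (CRel (SpRel s)) (SpTerm s))
    (ι : SpK s → V) (𝒮 : Struc (CRel (SpRel s)) V) : Prop :=
  ∃ m : SpTerm s → V, Set.InjOn m (adom T0) ∧ (∀ k, m (Sum.inr k) = ι k) ∧
    smap m T0 = 𝒮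

/-- Erase the colors of a colored structure. -/
def dalt {s : ℕ} {V : Type*} (S : Struc (CRel (SpRel s)) V) : Struc (SpRel s) V :=
  (fun a => (a.1.1, a.2)) '' S

/-- `𝒮` is a real s-pider in `S`: a minimal substructure whose daltonisation
satisfies `Φ_s`. -/
def RealSpider {s : ℕ} {V : Type*} (S 𝒮 : Struc (CRel (SpRel s)) V)
    (ι : SpK s → V) : Prop :=
  𝒮 ⊆ S ∧ (∃ h, IsHom (Phi s) (dalt 𝒮) ι h) ∧
    ∀ 𝒮' ⊂ 𝒮, ¬ ∃ h, IsHom (Phi s) (dalt 𝒮') ι h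

/-- Abstract ideal s-piders: a color and the two lame indices.  `𝔸_s`. -/
abbrev ISp (s : ℕ) := Bool × Option (Fin s) × Option (Fin s)

/-- The canonical structure of an abstract ideal s-pider. -/
def idealOf (s : ℕ) (p : ISp s) : Struc (CRel (SpRel s)) (SpTerm s) :=
  idealSp s p.1 p.2.1 p.2.2

/-- The zoo: all ideal s-piders isomorphic to some real s-pider in `S`. -/
def zoo {s : ℕ} (S : Struc (CRel (SpRel s)) (SpTerm s)) : Set (ISp s) :=
  {p | ∃ 𝒮, RealSpider S 𝒮 (spι s) ∧ IsCopy (idealOf s p) (spι s) 𝒮}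

/-- Closure of a set of abstract ideal s-piders under the partial functions
`f^I_J` for `(I,J) ∈ F`. -/
def ClosedUnder {s : ℕ} (F : Set (Option (Fin s) × Option (Fin s)))
    (Z : Set (ISp s)) : Prop :=
  ∀ IJ ∈ F, ∀ p ∈ Z, osub p.2.1 IJ.1 → osub p.2.2 IJ.2 →
    (!p.1, odiff IJ.1 p.2.1, odiff IJ.2 p.2.2) ∈ Z

end Spider

namespace RedIffLower
open CQD Spider

variable {s : ℕ}

/-- Head atom. -/
def Hat (s : ℕ) (c : Bool) (v t a : SpTerm s) : CRel (SpRel s) × List (SpTerm s) :=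
  ((SpRel.H, c), [v, t, a])

/-- Lower thigh atom. -/
def Tat (s : ℕ) (i : Fin s) (c : Bool) (v x : SpTerm s) : CRel (SpRel s) × List (SpTerm s) :=
  ((SpRel.Tlo i, c), [v, x])

/-- Lower calf atom. -/
def Cat (s : ℕ) (i : Fin s) (e : Bool) (x : SpTerm s) : CRel (SpRel s) × List (SpTerm s) :=
  ((SpRel.Clo i, e), [x, (Sum.inr (Sum.inl i) : SpTerm s)])

/-- The colour invariant. -/
def Inv (s : ℕ) (S : Struc (CRel (SpRel s)) (SpTerm s)) : Prop :=
  (∀ v t a, Hat s true v t a ∈ S → ∀ i x, Tat s i true v x ∈ S → Cat s i false x ∉ S) ∧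
  (∀ v t a, Hat s false v t a ∈ S → ∃ j x, Tat s j false v x ∈ S ∧ Cat s j true x ∈ S) ∧
  (∀ i e e' v x x', Tat s i e v x ∈ S → Tat s i e' v x' ∈ S → x = x') ∧
  (∀ i e e' x, Cat s i e x ∈ S → Cat s i e' x ∈ S → e = e') ∧
  (∀ i e v x, Tat s i e v x ∈ S → ∃ e', Cat s i e' x ∈ S)

lemma mem_Phi {a : SpRel s × List (SpTerm s)} :
    a ∈ Phi s ↔ a = (SpRel.H, [vz s, vtail s, vant s]) ∨
      ∃ i : Fin s, a = (SpRel.Tlo i, [vz s, vx s i]) ∨ a = (SpRel.Tup i, [vz s, vy s i]) ∨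
        a = (SpRel.Clo i, [vx s i, clo s i]) ∨ a = (SpRel.Cup i, [vy s i, cup s i]) := by
  simp [Phi, Set.mem_union, Set.mem_iUnion, Set.mem_insert_iff]

lemma mem_idealSp {c : Bool} {I J : Option (Fin s)} {a : CRel (SpRel s) × List (SpTerm s)} :
    a ∈ idealSp s c I J ↔ a = Hat s c (vz s) (vtail s) (vant s) ∨
      ∃ i : Fin s, a = ((SpRel.Tlo i, c), [vz s, vx s i]) ∨
        a = ((SpRel.Tup i, c), [vz s, vy s i]) ∨
        a = ((SpRel.Clo i, if J = some i then !c else c), [vx s i, clo s i]) ∨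
        a = ((SpRel.Cup i, if I = some i then !c else c), [vy s i, cup s i]) := by
  simp [idealSp, Hat, Set.mem_union, Set.mem_iUnion, Set.mem_insert_iff]

lemma mem_smap {R D E : Type*} (f : D → E) (S : Struc R D) (a : R × List E) :
    a ∈ smap f S ↔ ∃ b ∈ S, (b.1, b.2.map f) = a := Set.mem_image _ _ _

lemma mem_paint {R K : Type*} (c : Bool) (Φ : Conj R K) (a : CRel R × List (Term K)) :
    a ∈ paint c Φ ↔ ∃ b ∈ Φ, ((b.1, c), b.2) = a := Set.mem_image _ _ _

lemma mem_adom_of {R D : Type*} {S : Struc R D} {a : R × List D} (h : a ∈ S) {d : D}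
    (hd : d ∈ a.2) : d ∈ adom S := ⟨a, h, hd⟩

end RedIffLower

namespace RedIffLower
open CQD Spider

variable {s : ℕ} {I : Option (Fin s)} {j₀ : Fin s}

lemma mem_free {n : ℕ} :
    n ∈ (spq s I (some j₀)).free ↔ (∃ i ∈ I, n = 2 * (i : ℕ) + 4) ∨ n = 2 * (j₀ : ℕ) + 3 := by
  simp [spq]

lemma zero_not_free : 0 ∉ (spq s I (some j₀)).free := by
  rw [mem_free]; rintro (⟨i, _, h⟩ | h) <;> omega

lemma one_not_free : 1 ∉ (spq s I (some j₀)).free := by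
  rw [mem_free]; rintro (⟨i, _, h⟩ | h) <;> omega

lemma two_not_free : 2 ∉ (spq s I (some j₀)).free := by
  rw [mem_free]; rintro (⟨i, _, h⟩ | h) <;> omega

lemma knee_free_iff {k : Fin s} :
    2 * (k : ℕ) + 3 ∈ (spq s I (some j₀)).free ↔ k = j₀ := by
  rw [mem_free]
  constructor
  · rintro (⟨i, _, h⟩ | h)
    · omega
    · exact Fin.ext (by omega)
  · rintro rfl; exact Or.inr rfl

lemma H_mem_body :
    (SpRel.H, [vz s, vtail s, vant s]) ∈ (spq s I (some j₀)).body := by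
  constructor
  · exact mem_Phi.2 (Or.inl rfl)
  · rintro (⟨i, _, h⟩ | ⟨j, _, h⟩) <;> simp_all

lemma Tlo_mem_body (k : Fin s) :
    (SpRel.Tlo k, [vz s, vx s k]) ∈ (spq s I (some j₀)).body := by
  constructor
  · exact mem_Phi.2 (Or.inr ⟨k, Or.inl rfl⟩)
  · rintro (⟨i, _, h⟩ | ⟨j, _, h⟩) <;> simp_all

lemma Clo_mem_body {k : Fin s} (hk : k ≠ j₀) :
    (SpRel.Clo k, [vx s k, clo s k]) ∈ (spq s I (some j₀)).body := by
  constructor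
  · exact mem_Phi.2 (Or.inr ⟨k, Or.inr (Or.inr (Or.inl rfl))⟩)
  · rintro (⟨i, _, h⟩ | ⟨j, hj, h⟩)
    · simp_all
    · rw [Option.mem_def, Option.some_inj] at hj
      subst hj
      exact hk (by simpa using congrArg Prod.fst h)

lemma body_H_shape {l : List (SpTerm s)} (h : (SpRel.H, l) ∈ (spq s I (some j₀)).body) :
    l = [vz s, vtail s, vant s] := by
  rcases mem_Phi.1 h.1 with h' | ⟨i, h' | h' | h' | h'⟩ <;> simp_all

lemma body_Tlo_shape {k : Fin s} {l : List (SpTerm s)}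
    (h : (SpRel.Tlo k, l) ∈ (spq s I (some j₀)).body) : l = [vz s, vx s k] := by
  rcases mem_Phi.1 h.1 with h' | ⟨i, h' | h' | h' | h'⟩ <;> simp_all

lemma body_Clo_shape {k : Fin s} {l : List (SpTerm s)}
    (h : (SpRel.Clo k, l) ∈ (spq s I (some j₀)).body) :
    k ≠ j₀ ∧ l = [vx s k, clo s k] := by
  have h2 := h.2
  rcases mem_Phi.1 h.1 with h' | ⟨i, h' | h' | h' | h'⟩ <;> simp_all

end RedIffLower

namespace RedIffLower
open CQD Spider

variable {s : ℕ}

lemma inv_init : Inv s (idealSp s true none none) := by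
  refine ⟨?_, ?_, ?_, ?_, ?_⟩
  · intro v t a _ i x _ hC
    rcases mem_idealSp.1 hC with h | ⟨i', h | h | h | h⟩ <;> simp_all [Cat, Hat]
  · intro v t a hH
    exfalso
    rcases mem_idealSp.1 hH with h | ⟨i', h | h | h | h⟩ <;> simp_all [Hat]
  · intro i e e' v x x' h1 h2
    rcases mem_idealSp.1 h1 with h | ⟨i1, h | h | h | h⟩ <;>
      rcases mem_idealSp.1 h2 with h' | ⟨i2, h' | h' | h' | h'⟩ <;> simp_all [Tat, Hat]
  · intro i e e' x h1 h2
    rcases mem_idealSp.1 h1 with h | ⟨i1, h | h | h | h⟩ <;>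
      rcases mem_idealSp.1 h2 with h' | ⟨i2, h' | h' | h' | h'⟩ <;> simp_all [Cat, Hat]
  · intro i e v x h1
    have hx : x = vx s i := by
      rcases mem_idealSp.1 h1 with h | ⟨i1, h | h | h | h⟩ <;> simp_all [Tat, Hat]
    subst hx
    exact ⟨true, mem_idealSp.2 (Or.inr ⟨i, Or.inr (Or.inr (Or.inl (by simp [Cat, clo])))⟩)⟩

end RedIffLower

namespace RedIffLower
open CQD Spider

variable {s : ℕ}

/-- The set of atoms added by one chase step with query `spq s I (some j₀)`,
head colour `c`, and assignment `g` on variables. -/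
def NewSet (s : ℕ) (c : Bool) (I : Option (Fin s)) (j₀ : Fin s) (g : ℕ → SpTerm s) :
    Struc (CRel (SpRel s)) (SpTerm s) :=
  smap (Sum.elim g (spι s)) (paint c (spq s I (some j₀)).body)

variable {c : Bool} {I : Option (Fin s)} {j₀ : Fin s} {g : ℕ → SpTerm s}

lemma mem_NewSet {a : CRel (SpRel s) × List (SpTerm s)} :
    a ∈ NewSet s c I j₀ g ↔ ∃ b ∈ (spq s I (some j₀)).body,
      ((b.1, c), b.2.map (Sum.elim g (spι s))) = a := by
  constructor
  · rintro ⟨b', ⟨b, hb, rfl⟩, rfl⟩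
    exact ⟨b, hb, rfl⟩
  · rintro ⟨b, hb, rfl⟩
    exact ⟨((b.1, c), b.2), ⟨b, hb, rfl⟩, rfl⟩

lemma NewSet_H_mem : Hat s c (g 0) (g 1) (g 2) ∈ NewSet s c I j₀ g :=
  mem_NewSet.2 ⟨_, H_mem_body, by simp [Hat, vz, vtail, vant]⟩

lemma NewSet_T_mem (k : Fin s) :
    Tat s k c (g 0) (g (2 * (k : ℕ) + 3)) ∈ NewSet s c I j₀ g :=
  mem_NewSet.2 ⟨_, Tlo_mem_body k, by simp [Tat, vz, vx]⟩

lemma NewSet_C_mem {k : Fin s} (hk : k ≠ j₀) :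
    Cat s k c (g (2 * (k : ℕ) + 3)) ∈ NewSet s c I j₀ g :=
  mem_NewSet.2 ⟨_, Clo_mem_body hk, by simp [Cat, vx, clo, spι]⟩

lemma NewSet_H_inv {cc : Bool} {v t a : SpTerm s} (hm : Hat s cc v t a ∈ NewSet s c I j₀ g) :
    cc = c ∧ v = g 0 := by
  rcases mem_NewSet.1 hm with ⟨⟨r, l⟩, hb, hba⟩
  simp only [Hat, Prod.mk.injEq] at hba
  obtain ⟨⟨hr, hc⟩, hl⟩ := hba
  subst hr
  have := body_H_shape hb
  subst this
  simp only [vz, vtail, vant, List.map] at hl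
  exact ⟨hc.symm, by simpa using (List.cons.injEq _ _ _ _ ▸ hl).1.symm⟩

lemma NewSet_T_inv {i : Fin s} {cc : Bool} {v x : SpTerm s}
    (hm : Tat s i cc v x ∈ NewSet s c I j₀ g) :
    cc = c ∧ v = g 0 ∧ x = g (2 * (i : ℕ) + 3) := by
  rcases mem_NewSet.1 hm with ⟨⟨r, l⟩, hb, hba⟩
  simp only [Tat, Prod.mk.injEq] at hba
  obtain ⟨⟨hr, hc⟩, hl⟩ := hba
  subst hr
  have := body_Tlo_shape hb
  subst this
  simp only [vz, vx, List.map] at hl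
  exact ⟨hc.symm, by simp_all⟩

lemma NewSet_C_inv {i : Fin s} {ee : Bool} {x : SpTerm s}
    (hm : Cat s i ee x ∈ NewSet s c I j₀ g) :
    ee = c ∧ i ≠ j₀ ∧ x = g (2 * (i : ℕ) + 3) := by
  rcases mem_NewSet.1 hm with ⟨⟨r, l⟩, hb, hba⟩
  simp only [Cat, Prod.mk.injEq] at hba
  obtain ⟨⟨hr, hc⟩, hl⟩ := hba
  subst hr
  obtain ⟨hij, hls⟩ := body_Clo_shape hb
  subst hls
  simp only [vx, List.map] at hl
  exact ⟨hc.symm, hij, by simp_all⟩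

end RedIffLower

namespace RedIffLower
open CQD Spider

variable {s : ℕ}

lemma Hat_adom {S : Struc (CRel (SpRel s)) (SpTerm s)} {cc : Bool} {v t a : SpTerm s}
    (h : Hat s cc v t a ∈ S) : v ∈ adom S := mem_adom_of h (by simp [Hat])

lemma Tat_adom_fst {S : Struc (CRel (SpRel s)) (SpTerm s)} {i : Fin s} {cc : Bool}
    {v x : SpTerm s} (h : Tat s i cc v x ∈ S) : v ∈ adom S := mem_adom_of h (by simp [Tat])

lemma Tat_adom_snd {S : Struc (CRel (SpRel s)) (SpTerm s)} {i : Fin s} {cc : Bool}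
    {v x : SpTerm s} (h : Tat s i cc v x ∈ S) : x ∈ adom S := mem_adom_of h (by simp [Tat])

lemma Cat_adom {S : Struc (CRel (SpRel s)) (SpTerm s)} {i : Fin s} {ee : Bool}
    {x : SpTerm s} (h : Cat s i ee x ∈ S) : x ∈ adom S := mem_adom_of h (by simp [Cat])

lemma inv_step {S S' : Struc (CRel (SpRel s)) (SpTerm s)} (hInv : Inv s S)
    {c : Bool} {I : Option (Fin s)} {j₀ : Fin s} {hh g : ℕ → SpTerm s}
    (hhom : IsHom (paint c (spq s I (some j₀)).body) S (spι s) hh)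
    (hagree : ∀ y ∈ (spq s I (some j₀)).free, g y = hh y)
    (hfresh : ∀ x ∉ (spq s I (some j₀)).free, g x ∉ adom S)
    (hS' : S' = S ∪ NewSet s (!c) I j₀ g) :
    Inv s S' := by
  obtain ⟨green, red, thU, cU, cE⟩ := hInv
  subst hS'
  have homH : Hat s c (hh 0) (hh 1) (hh 2) ∈ S := by
    have := hhom _ ((mem_paint c _ _).2 ⟨_, H_mem_body, rfl⟩)
    simpa [Hat, vz, vtail, vant] using this
  have homT : ∀ k : Fin s, Tat s k c (hh 0) (hh (2 * (k : ℕ) + 3)) ∈ S := by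
    intro k
    have := hhom _ ((mem_paint c _ _).2 ⟨_, Tlo_mem_body k, rfl⟩)
    simpa [Tat, vz, vx] using this
  have homC : ∀ k : Fin s, k ≠ j₀ → Cat s k c (hh (2 * (k : ℕ) + 3)) ∈ S := by
    intro k hk
    have := hhom _ ((mem_paint c _ _).2 ⟨_, Clo_mem_body hk, rfl⟩)
    simpa [Cat, vx, clo, spι] using this
  have hg0 : g 0 ∉ adom S := hfresh 0 zero_not_free
  have hgk : ∀ k : Fin s, k ≠ j₀ → g (2 * (k : ℕ) + 3) ∉ adom S := fun k hk =>
    hfresh _ (fun hmem => hk (knee_free_iff.1 hmem))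
  have hgj : g (2 * (j₀ : ℕ) + 3) = hh (2 * (j₀ : ℕ) + 3) := hagree _ (knee_free_iff.2 rfl)
  refine ⟨?_, ?_, ?_, ?_, ?_⟩
  -- green clause
  · intro v t a hH i x hT hC
    rw [Set.mem_union] at hH hT hC
    rcases hH with hH | hH
    · have hv : v ∈ adom S := Hat_adom hH
      rcases hT with hT | hT
      · have hx : x ∈ adom S := Tat_adom_snd hT
        rcases hC with hC | hC
        · exact green v t a hH i x hT hC
        · obtain ⟨_, hij, hxg⟩ := NewSet_C_inv hC
          exact (hgk i hij) (hxg ▸ hx)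
      · obtain ⟨_, hv', _⟩ := NewSet_T_inv hT
        exact hg0 (hv' ▸ hv)
    · obtain ⟨hcc, hv⟩ := NewSet_H_inv hH
      have hc : c = false := by
        cases c
        · rfl
        · simp at hcc
      subst hc
      rcases hT with hT | hT
      · exact hg0 (hv ▸ Tat_adom_fst hT)
      · obtain ⟨_, _, hxg⟩ := NewSet_T_inv hT
        by_cases hij : i = j₀
        · subst hij
          obtain ⟨j₁, x₁, hTj₁, hCj₁⟩ := red _ _ _ homH
          have hx1 : x₁ = hh (2 * (j₁ : ℕ) + 3) := thU j₁ false false (hh 0) x₁ _ hTj₁ (homT j₁)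
          by_cases hj1 : j₁ = i
          · subst hj1
            rcases hC with hC | hC
            · have hxx : x = x₁ := by rw [hx1, hxg, hgj]
              have := cU j₁ false true x hC (hxx ▸ hCj₁)
              simp at this
            · obtain ⟨he, _, _⟩ := NewSet_C_inv hC
              simp at he
          · have hcalf := homC j₁ hj1
            have := cU j₁ true false _ (hx1 ▸ hCj₁) hcalf
            simp at this
        · rcases hC with hC | hC
          · exact (hgk i hij) (hxg ▸ Cat_adom hC)
          · obtain ⟨he, _, _⟩ := NewSet_C_inv hC
            simp at he
  -- red clause
  · intro v t a hH
    rw [Set.mem_union] at hH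
    rcases hH with hH | hH
    · obtain ⟨j, x, hT, hC⟩ := red v t a hH
      exact ⟨j, x, Set.mem_union_left _ hT, Set.mem_union_left _ hC⟩
    · obtain ⟨hcc, hv⟩ := NewSet_H_inv hH
      have hc : c = true := by
        cases c
        · simp at hcc
        · rfl
      subst hc
      refine ⟨j₀, g (2 * (j₀ : ℕ) + 3), ?_, ?_⟩
      · rw [hv]
        exact Set.mem_union_right _ (by simpa using NewSet_T_mem (c := !true) j₀)
      · have hT := homT j₀
        obtain ⟨e', hCe⟩ := cE j₀ true (hh 0) _ hT
        have he' : e' = true := by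
          cases e'
          · exact absurd hCe (green _ _ _ homH j₀ _ hT)
          · rfl
        subst he'
        exact Set.mem_union_left _ (hgj ▸ hCe)
  -- thigh uniqueness
  · intro i e e' v x x' h1 h2
    rw [Set.mem_union] at h1 h2
    rcases h1 with h1 | h1 <;> rcases h2 with h2 | h2
    · exact thU i e e' v x x' h1 h2
    · obtain ⟨_, hv, _⟩ := NewSet_T_inv h2
      exact absurd (hv ▸ Tat_adom_fst h1) hg0
    · obtain ⟨_, hv, _⟩ := NewSet_T_inv h1
      exact absurd (hv ▸ Tat_adom_fst h2) hg0
    · obtain ⟨_, _, hx⟩ := NewSet_T_inv h1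
      obtain ⟨_, _, hx'⟩ := NewSet_T_inv h2
      rw [hx, hx']
  -- calf uniqueness
  · intro i e e' x h1 h2
    rw [Set.mem_union] at h1 h2
    rcases h1 with h1 | h1 <;> rcases h2 with h2 | h2
    · exact cU i e e' x h1 h2
    · obtain ⟨_, hij, hx⟩ := NewSet_C_inv h2
      exact absurd (hx ▸ Cat_adom h1) (hgk i hij)
    · obtain ⟨_, hij, hx⟩ := NewSet_C_inv h1
      exact absurd (hx ▸ Cat_adom h2) (hgk i hij)
    · obtain ⟨he, _, _⟩ := NewSet_C_inv h1
      obtain ⟨he', _, _⟩ := NewSet_C_inv h2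
      rw [he, he']
  -- calf existence
  · intro i e v x h1
    rw [Set.mem_union] at h1
    rcases h1 with h1 | h1
    · obtain ⟨e', hC⟩ := cE i e v x h1
      exact ⟨e', Set.mem_union_left _ hC⟩
    · obtain ⟨_, _, hx⟩ := NewSet_T_inv h1
      by_cases hij : i = j₀
      · subst hij
        obtain ⟨e', hC⟩ := cE i c (hh 0) _ (homT i)
        refine ⟨e', Set.mem_union_left _ ?_⟩
        rw [hx, hgj]
        exact hC
      · exact ⟨!c, Set.mem_union_right _ (hx ▸ NewSet_C_mem hij)⟩

end RedIffLower

namespace RedIffLower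
open CQD Spider

variable {s : ℕ}

lemma mem_partUnion {X : Type*} {seq : Ordinal.{0} → Set X} {i : Ordinal.{0}} {a : X} :
    a ∈ partUnion seq i ↔ ∃ j < i, a ∈ seq j := by
  simp [partUnion]

lemma partUnion_mono {X : Type*} {seq : Ordinal.{0} → Set X} {i j : Ordinal.{0}} (h : i ≤ j) :
    partUnion seq i ⊆ partUnion seq j := by
  intro a ha
  obtain ⟨k, hk, hak⟩ := mem_partUnion.1 ha
  exact mem_partUnion.2 ⟨k, lt_of_lt_of_le hk h, hak⟩

lemma seq_subset_partUnion {X : Type*} {seq : Ordinal.{0} → Set X} {i j : Ordinal.{0}}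
    (h : j < i) : seq j ⊆ partUnion seq i :=
  fun a ha => mem_partUnion.2 ⟨j, h, ha⟩

lemma partUnion_one {X : Type*} {seq : Ordinal.{0} → Set X} : partUnion seq 1 = seq 0 := by
  ext a
  simp only [mem_partUnion, Ordinal.lt_one_iff_zero]
  exact ⟨fun ⟨j, hj, ha⟩ => hj ▸ ha, fun ha => ⟨0, rfl, ha⟩⟩

lemma partUnion_succ {X : Type*} {seq : Ordinal.{0} → Set X} {j : Ordinal.{0}} :
    partUnion seq (j + 1) = partUnion seq j ∪ seq j := by
  ext a
  simp only [mem_partUnion, Set.mem_union]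
  constructor
  · rintro ⟨k, hk, ha⟩
    rcases lt_or_eq_of_le (Order.lt_add_one_iff.1 hk) with h | h
    · exact Or.inl ⟨k, h, ha⟩
    · exact Or.inr (h ▸ ha)
  · rintro (⟨k, hk, ha⟩ | ha)
    · exact ⟨k, hk.trans (Order.lt_add_one_iff.2 le_rfl), ha⟩
    · exact ⟨j, Order.lt_add_one_iff.2 le_rfl, ha⟩

lemma inv_stage {F : Set (Option (Fin s) × Option (Fin s))}
    (hF : ∀ IJ ∈ F, IJ.2.isSome)
    (C : ChaseSeq (TQ ((fun IJ => spq s IJ.1 IJ.2) '' F)) (idealSp s true none none) (spι s)) :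
    ∀ i ≤ C.len, Inv s (partUnion C.seq i) := by
  intro i
  induction i using Ordinal.induction with
  | h i IH =>
  intro hil
  have key : ∀ j < i, Inv s (partUnion C.seq (j + 1)) := by
    intro j hj
    by_cases hj0 : j = 0
    · subst hj0
      rw [zero_add, partUnion_one, C.init]
      exact inv_init
    · have hjpos : 0 < j := pos_iff_ne_zero.2 hj0
      have hjlen : j < C.len := lt_of_lt_of_le hj hil
      obtain ⟨p, hpTodo, hstep⟩ := C.step j hjpos hjlen
      obtain ⟨hTQ, hbody, -⟩ := hpTodo
      obtain ⟨Q, hQ, c, hTeq⟩ := hTQ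
      obtain ⟨IJ, hIJF, hQeq⟩ := hQ
      obtain ⟨I, J⟩ := IJ
      obtain ⟨j₀, hj₀⟩ := Option.isSome_iff_exists.1 (hF _ hIJF)
      obtain ⟨g, hgfr, hgfresh, -, hseqj⟩ := hstep
      rw [hTeq] at hbody hseqj hgfr hgfresh
      obtain ⟨hh, hhhom, hhfr⟩ := hbody
      subst hQeq
      simp only [tgdGR] at hhhom hhfr hgfr hgfresh hseqj
      subst hj₀
      have hUsucc : partUnion C.seq (j + 1) =
          partUnion C.seq j ∪ NewSet s (!c) I j₀ g := by
        rw [partUnion_succ, hseqj]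
        rw [← Set.union_assoc, Set.union_self]
        rfl
      refine inv_step (IH j hj hjlen.le) (hh := hh) (g := g) ?_ ?_ ?_ hUsucc
      · exact hhhom
      · intro y hy
        rw [hgfr y hy, hhfr y hy]
      · intro x hx
        exact (hgfresh x hx).1
  -- now derive Inv at stage i from the stages below
  have lift : ∀ a ∈ partUnion C.seq i, ∃ j, j < i ∧ a ∈ partUnion C.seq (j + 1) := by
    intro a ha
    obtain ⟨j, hj, haj⟩ := mem_partUnion.1 ha
    exact ⟨j, hj, seq_subset_partUnion (Order.lt_add_one_iff.2 le_rfl) haj⟩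
  have up : ∀ {j J : Ordinal.{0}}, j ≤ J →
      partUnion C.seq (j + 1) ⊆ partUnion C.seq (J + 1) :=
    fun hjJ => partUnion_mono (add_le_add_left hjJ 1)
  have down : ∀ {J : Ordinal.{0}}, J < i → partUnion C.seq (J + 1) ⊆ partUnion C.seq i :=
    fun hJ => partUnion_mono (Order.add_one_le_iff.2 hJ)
  refine ⟨?_, ?_, ?_, ?_, ?_⟩
  · intro v t a hH k x hT hC
    obtain ⟨j1, hj1, hH1⟩ := lift _ hH
    obtain ⟨j2, hj2, hT2⟩ := lift _ hT
    obtain ⟨j3, hj3, hC3⟩ := lift _ hC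
    have hJ : max j1 (max j2 j3) < i := max_lt hj1 (max_lt hj2 hj3)
    exact (key _ hJ).1 v t a (up (le_max_left _ _) hH1) k x
      (up ((le_max_left _ _).trans (le_max_right _ _)) hT2)
      (up ((le_max_right _ _).trans (le_max_right _ _)) hC3)
  · intro v t a hH
    obtain ⟨j1, hj1, hH1⟩ := lift _ hH
    obtain ⟨j, x, hT, hC⟩ := (key _ hj1).2.1 v t a hH1
    exact ⟨j, x, down hj1 hT, down hj1 hC⟩
  · intro k e e' v x x' h1 h2
    obtain ⟨j1, hj1, h1'⟩ := lift _ h1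
    obtain ⟨j2, hj2, h2'⟩ := lift _ h2
    have hJ : max j1 j2 < i := max_lt hj1 hj2
    exact (key _ hJ).2.2.1 k e e' v x x' (up (le_max_left _ _) h1') (up (le_max_right _ _) h2')
  · intro k e e' x h1 h2
    obtain ⟨j1, hj1, h1'⟩ := lift _ h1
    obtain ⟨j2, hj2, h2'⟩ := lift _ h2
    have hJ : max j1 j2 < i := max_lt hj1 hj2
    exact (key _ hJ).2.2.2.1 k e e' x (up (le_max_left _ _) h1') (up (le_max_right _ _) h2')
  · intro k e v x h1
    obtain ⟨j1, hj1, h1'⟩ := lift _ h1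
    obtain ⟨e', hC⟩ := (key _ hj1).2.2.2.2 k e v x h1'
    exact ⟨e', down hj1 hC⟩

end RedIffLower

open CQD Spider in
/-- **Lower queries produce red-iff-lower zoo.**  If every s-pider
query `f^I_J`, `(I,J) ∈ F`, is lower (i.e. `J` is nonempty), then an ideal s-pider
in the zoo of the chase is red iff it is lower.  In particular the red full s-pider
never appears. -/
theorem red_iff_lower (s : ℕ) (F : Set (Option (Fin s) × Option (Fin s)))
    (hF : ∀ IJ ∈ F, IJ.2.isSome)
    (S : Struc (CRel (SpRel s)) (SpTerm s))
    (hS : SpChase s ((fun IJ => spq s IJ.1 IJ.2) '' F) S) :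
    (∀ p ∈ zoo S, p.1 = false ↔ p.2.2.isSome) ∧
    ((false, none, none) : ISp s) ∉ zoo S := by
  
  obtain ⟨C, hC⟩ := hS
  have hinv : RedIffLower.Inv s S := by
    rw [← hC]
    exact RedIffLower.inv_stage hF C C.len le_rfl
  have main : ∀ p ∈ zoo S, p.1 = false ↔ p.2.2.isSome := by
    rintro ⟨c, I, J⟩ ⟨𝒮, ⟨hsub, -, -⟩, m, -, hmc, hcopy⟩
    obtain ⟨green, red, thU, cU, -⟩ := hinv
    have inS : ∀ a ∈ idealSp s c I J, (a.1, a.2.map m) ∈ S := by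
      intro a ha
      apply hsub
      rw [← hcopy]
      exact ⟨a, ha, rfl⟩
    have spH : RedIffLower.Hat s c (m (vz s)) (m (vtail s)) (m (vant s)) ∈ S := by
      have := inS _ (RedIffLower.mem_idealSp.2 (Or.inl rfl))
      simpa [RedIffLower.Hat] using this
    have spT : ∀ k : Fin s, RedIffLower.Tat s k c (m (vz s)) (m (vx s k)) ∈ S := by
      intro k
      have := inS _ (RedIffLower.mem_idealSp.2 (Or.inr ⟨k, Or.inl rfl⟩))
      simpa [RedIffLower.Tat] using this
    have spC : ∀ k : Fin s,
        RedIffLower.Cat s k (if J = some k then !c else c) (m (vx s k)) ∈ S := by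
      intro k
      have := inS _ (RedIffLower.mem_idealSp.2 (Or.inr ⟨k, Or.inr (Or.inr (Or.inl rfl))⟩))
      simpa [RedIffLower.Cat, clo, spι, hmc (Sum.inl k)] using this
    show c = false ↔ J.isSome
    constructor
    · rintro rfl
      obtain ⟨j, x, hT, hC'⟩ := red _ _ _ spH
      have hx : x = m (vx s j) := thU j false false _ x _ hT (spT j)
      subst hx
      have hcol := cU j true (if J = some j then !false else false) _ hC' (spC j)
      by_cases hJ : J = some j
      · rw [hJ]; rfl
      · rw [if_neg hJ] at hcol
        simp at hcol
    · intro hJs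
      obtain ⟨j, hJ⟩ := Option.isSome_iff_exists.1 hJs
      by_contra hc
      have hc' : c = true := by
        cases c
        · exact absurd rfl hc
        · rfl
      subst hc'
      exact green _ _ _ spH j _ (spT j) (by simpa [hJ] using spC j)
  refine ⟨main, fun hmem => ?_⟩
  have := main _ hmem
  simp at this
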